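/- For real coupling constants J₁, J₂, J₃, define for a triple of vectors s = (s₁,s₂,s₃) in ℝ³ the map 𝒥(s) := ((J₂ s₃ + J₃ s₂) × s₁, (J₃ s₁ + J₁ s₃) × s₂, (J₁ s₂ + J₂ s₁) × s₃). Let r = (r₁,r₂,r₃) : ℝ → (ℝ³)³ be differentiable, let Z : ℝ → SO(3) be differentiable with Ż(t) = Z(t)Ω(t) for some matrix-valued function Ω, and set s(t) := (Z(t)r₁(t), Z(t)r₂(t), Z(t)r₃(t)). Then ṡ(t) − 𝒥(s(t)) = Z(t)·(Ω(t)r(t) + ṙ(t) − 𝒥(r(t))) (applied componentwise). In particular, s satisfies the equations of motion ṡ = 𝒥(s) if and only if Ω(t)r(t) + ṙ(t) − 𝒥(r(t)) = 0 for all t. -/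

import Mathlib

open Matrix

/-- The map `𝒥` appearing on the right-hand side of the equations of motion of the classical
spin triangle: for a triple of vectors `s = (s 0, s 1, s 2)` in ℝ³,
`𝒥(s) = ((J₂ s₃ + J₃ s₂) × s₁, (J₃ s₁ + J₁ s₃) × s₂, (J₁ s₂ + J₂ s₁) × s₃)`. -/
def spinJ (J₁ J₂ J₃ : ℝ) (s : Fin 3 → Fin 3 → ℝ) : Fin 3 → Fin 3 → ℝ :=
  ![crossProduct (J₂ • s 2 + J₃ • s 1) (s 0),
    crossProduct (J₃ • s 0 + J₁ • s 2) (s 1),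
    crossProduct (J₁ • s 1 + J₂ • s 0) (s 2)]

lemma cross_mulVec_det (M : Matrix (Fin 3) (Fin 3) ℝ) (a b : Fin 3 → ℝ) :
    Mᵀ.mulVec (crossProduct (M.mulVec a) (M.mulVec b)) = M.det • crossProduct a b := by
  funext i
  fin_cases i <;>
    simp [crossProduct, mulVec, dotProduct, Fin.sum_univ_three, Matrix.det_fin_three,
      Matrix.transpose_apply] <;> ring

lemma so3_transpose_mul (Z : Matrix (Fin 3) (Fin 3) ℝ)
    (hZ : Z ∈ Matrix.specialOrthogonalGroup (Fin 3) ℝ) : Zᵀ * Z = 1 := by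
  have := hZ.1.1
  simpa [Matrix.star_eq_conjTranspose, Matrix.conjTranspose_eq_transpose_of_trivial] using this

lemma so3_mul_transpose (Z : Matrix (Fin 3) (Fin 3) ℝ)
    (hZ : Z ∈ Matrix.specialOrthogonalGroup (Fin 3) ℝ) : Z * Zᵀ = 1 := by
  have := hZ.1.2
  simpa [Matrix.star_eq_conjTranspose, Matrix.conjTranspose_eq_transpose_of_trivial] using this

lemma so3_cross (Z : Matrix (Fin 3) (Fin 3) ℝ)
    (hZ : Z ∈ Matrix.specialOrthogonalGroup (Fin 3) ℝ) (a b : Fin 3 → ℝ) :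
    Z.mulVec (crossProduct a b) = crossProduct (Z.mulVec a) (Z.mulVec b) := by
  have hdet : Z.det = 1 := (Matrix.mem_specialOrthogonalGroup_iff.mp hZ).2
  have key := cross_mulVec_det Z a b
  rw [hdet, one_smul] at key
  calc Z.mulVec (crossProduct a b)
      = Z.mulVec (Zᵀ.mulVec (crossProduct (Z.mulVec a) (Z.mulVec b))) := by rw [key]
    _ = _ := by rw [Matrix.mulVec_mulVec, so3_mul_transpose Z hZ, Matrix.one_mulVec]

lemma so3_mulVec_eq_zero (Z : Matrix (Fin 3) (Fin 3) ℝ)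
    (hZ : Z ∈ Matrix.specialOrthogonalGroup (Fin 3) ℝ) {x : Fin 3 → ℝ}
    (h : Z.mulVec x = 0) : x = 0 := by
  calc x = (Zᵀ * Z).mulVec x := by rw [so3_transpose_mul Z hZ, Matrix.one_mulVec]
    _ = Zᵀ.mulVec (Z.mulVec x) := (Matrix.mulVec_mulVec _ _ _).symm
    _ = 0 := by rw [h, Matrix.mulVec_zero]

lemma spinJ_equivariant (J₁ J₂ J₃ : ℝ) (Z : Matrix (Fin 3) (Fin 3) ℝ)
    (hZ : Z ∈ Matrix.specialOrthogonalGroup (Fin 3) ℝ) (r : Fin 3 → Fin 3 → ℝ) (μ : Fin 3) :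
    spinJ J₁ J₂ J₃ (fun ν => Z.mulVec (r ν)) μ = Z.mulVec (spinJ J₁ J₂ J₃ r μ) := by
  fin_cases μ <;>
    simp [spinJ, so3_cross Z hZ, Matrix.mulVec_add, Matrix.mulVec_smul]

/-- if `s(t) = Z(t) r(t)` componentwise, with `Z : ℝ → SO(3)` differentiable
(entrywise) satisfying `Ż = ZΩ`, then `ṡ − 𝒥(s) = Z·(Ωr + ṙ − 𝒥(r))` componentwise; in
particular `s` satisfies the equations of motion `ṡ = 𝒥(s)` iff `Ωr + ṙ − 𝒥(r) = 0`. -/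
theorem rotated_configuration_eom (J₁ J₂ J₃ : ℝ)
    (r : ℝ → Fin 3 → Fin 3 → ℝ)
    (Z : ℝ → Matrix (Fin 3) (Fin 3) ℝ)
    (Ω : ℝ → Matrix (Fin 3) (Fin 3) ℝ)
    (hr : ∀ μ : Fin 3, Differentiable ℝ fun t => r t μ)
    (hZdiff : ∀ i j : Fin 3, Differentiable ℝ fun t => Z t i j)
    (hZSO : ∀ t, Z t ∈ Matrix.specialOrthogonalGroup (Fin 3) ℝ)
    (hZderiv : ∀ t (i j : Fin 3), deriv (fun τ => Z τ i j) t = (Z t * Ω t) i j)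
    (s : ℝ → Fin 3 → Fin 3 → ℝ)
    (hs : ∀ t (μ : Fin 3), s t μ = (Z t).mulVec (r t μ)) :
    (∀ t (μ : Fin 3),
      deriv (fun τ => s τ μ) t - spinJ J₁ J₂ J₃ (s t) μ
        = (Z t).mulVec
            ((Ω t).mulVec (r t μ) + deriv (fun τ => r τ μ) t - spinJ J₁ J₂ J₃ (r t) μ)) ∧
    ((∀ t (μ : Fin 3), deriv (fun τ => s τ μ) t = spinJ J₁ J₂ J₃ (s t) μ) ↔
      (∀ t (μ : Fin 3),
        (Ω t).mulVec (r t μ) + deriv (fun τ => r τ μ) t - spinJ J₁ J₂ J₃ (r t) μ = 0)) := by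
  have main : ∀ t (μ : Fin 3),
      deriv (fun τ => s τ μ) t - spinJ J₁ J₂ J₃ (s t) μ
        = (Z t).mulVec
            ((Ω t).mulVec (r t μ) + deriv (fun τ => r τ μ) t - spinJ J₁ J₂ J₃ (r t) μ) := by
    intro t μ
    have hr' : ∀ j : Fin 3, Differentiable ℝ fun τ => r τ μ j := fun j =>
      differentiable_pi.mp (hr μ) j
    -- derivative of s componentwise
    have hseq : (fun τ => s τ μ) = fun τ i => ∑ j, Z τ i j * r τ μ j := by
      funext τ
      rw [hs τ μ]
      rfl
    have hcomp : ∀ i : Fin 3, Differentiable ℝ fun τ => ∑ j, Z τ i j * r τ μ j := fun i =>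
      Differentiable.fun_sum fun j _ => (hZdiff i j).mul (hr' j)
    have hd : deriv (fun τ => s τ μ) t
        = fun i => ∑ j, ((Z t * Ω t) i j * r t μ j + Z t i j * deriv (fun τ => r τ μ j) t) := by
      rw [hseq, deriv_pi fun i => (hcomp i).differentiableAt]
      funext i
      rw [deriv_fun_sum fun j _ => ((hZdiff i j).fun_mul (hr' j)).differentiableAt]
      refine Finset.sum_congr rfl fun j _ => ?_
      rw [deriv_fun_mul ((hZdiff i j).differentiableAt) ((hr' j).differentiableAt), hZderiv]
    have hrd : deriv (fun τ => r τ μ) t = fun j => deriv (fun τ => r τ μ j) t :=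
      deriv_pi fun j => (hr' j).differentiableAt
    have hst : s t = fun ν => (Z t).mulVec (r t ν) := funext fun ν => hs t ν
    have hsp : spinJ J₁ J₂ J₃ (s t) μ = (Z t).mulVec (spinJ J₁ J₂ J₃ (r t) μ) := by
      rw [hst, spinJ_equivariant J₁ J₂ J₃ (Z t) (hZSO t)]
    rw [hd, hsp, Matrix.mulVec_sub, Matrix.mulVec_add, Matrix.mulVec_mulVec, hrd]
    funext i
    simp [Matrix.mulVec, dotProduct, Finset.sum_add_distrib, Finset.mul_sum]
  refine ⟨main, ?_, ?_⟩
  · intro heom t μ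
    have h := main t μ
    rw [heom t μ, sub_self] at h
    exact so3_mulVec_eq_zero (Z t) (hZSO t) h.symm
  · intro h0 t μ
    have h := main t μ
    rw [h0 t μ, Matrix.mulVec_zero] at h
    exact sub_eq_zero.mp h
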